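/- For any C¹ functions v₁, v₂ : ℝ² → ℝ and ε > 0 with ε ∉ {2, 4/7, 3/4, 1/2}, the pair a⁽¹⁾(u) = u₁²/(2−ε) + u₂²u₃/(4−7ε) + v₁(u₂/u₁², u₃/u₁³)·u₁^{4/ε}, a⁽²⁾(u) = 3u₁⁴/(3−4ε) + u₂³/(3−6ε) + v₂(u₂/u₁², u₃/u₁³)·u₁^{3/ε}, defined for u₁ > 0, solves the pair of first-order PDEs ε(u₁∂₁ + 2u₂∂₂ + 3u₃∂₃)a⁽¹⁾ − 4a⁽¹⁾ + 2u₁² + u₂²u₃ = 0 and ε(u₁∂₁ + 2u₂∂₂ + 3u₃∂₃)a⁽²⁾ − 3a⁽²⁾ + 3u₁⁴ + u₂³ = 0. -/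

import Mathlib

open Real

lemma slot1 (v : ℝ × ℝ → ℝ) (hv : ContDiff ℝ 1 v) (c ε u₁ u₂ u₃ : ℝ) (h : 0 < u₁) :
    HasDerivAt (fun s : ℝ => v (u₂ / s ^ 2, u₃ / s ^ 3) * s ^ (c / ε))
      ((fderiv ℝ v (u₂ / u₁ ^ 2, u₃ / u₁ ^ 3)) (-2 * u₂ / u₁ ^ 3, -3 * u₃ / u₁ ^ 4) * u₁ ^ (c / ε)
        + v (u₂ / u₁ ^ 2, u₃ / u₁ ^ 3) * (c / ε * u₁ ^ (c / ε - 1))) u₁ := by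
  have h2 : HasDerivAt (fun s : ℝ => u₂ / s ^ 2) (-2 * u₂ / u₁ ^ 3) u₁ := by
    have := (hasDerivAt_const u₁ u₂).div (hasDerivAt_pow 2 u₁) (pow_ne_zero 2 h.ne')
    refine this.congr_deriv ?_
    field_simp
    ring
  have h3 : HasDerivAt (fun s : ℝ => u₃ / s ^ 3) (-3 * u₃ / u₁ ^ 4) u₁ := by
    have := (hasDerivAt_const u₁ u₃).div (hasDerivAt_pow 3 u₁) (pow_ne_zero 3 h.ne')
    refine this.congr_deriv ?_
    field_simp
    ring
  have hγ : HasDerivAt (fun s : ℝ => ((u₂ / s ^ 2, u₃ / s ^ 3) : ℝ × ℝ))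
      ((-2 * u₂ / u₁ ^ 3, -3 * u₃ / u₁ ^ 4)) u₁ := h2.prodMk h3
  have hL := ((hv.differentiable one_ne_zero) (u₂ / u₁ ^ 2, u₃ / u₁ ^ 3)).hasFDerivAt.comp_hasDerivAt u₁ hγ
  have hr : HasDerivAt (fun s : ℝ => s ^ (c / ε)) (c / ε * u₁ ^ (c / ε - 1)) u₁ :=
    Real.hasDerivAt_rpow_const (Or.inl h.ne')
  exact hL.mul hr

lemma slot2 (v : ℝ × ℝ → ℝ) (hv : ContDiff ℝ 1 v) (c ε u₁ u₂ u₃ : ℝ) (_h : 0 < u₁) :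
    HasDerivAt (fun s : ℝ => v (s / u₁ ^ 2, u₃ / u₁ ^ 3) * u₁ ^ (c / ε))
      ((fderiv ℝ v (u₂ / u₁ ^ 2, u₃ / u₁ ^ 3)) (1 / u₁ ^ 2, 0) * u₁ ^ (c / ε)) u₂ := by
  have hγ : HasDerivAt (fun s : ℝ => ((s / u₁ ^ 2, u₃ / u₁ ^ 3) : ℝ × ℝ)) ((1 / u₁ ^ 2, 0)) u₂ := by
    have h1 : HasDerivAt (fun s : ℝ => s / u₁ ^ 2) (1 / u₁ ^ 2) u₂ := by
      simpa using (hasDerivAt_id u₂).div_const (u₁ ^ 2)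
    exact h1.prodMk (hasDerivAt_const u₂ _)
  exact (((hv.differentiable one_ne_zero) _).hasFDerivAt.comp_hasDerivAt u₂ hγ).mul_const _

lemma slot3 (v : ℝ × ℝ → ℝ) (hv : ContDiff ℝ 1 v) (c ε u₁ u₂ u₃ : ℝ) (_h : 0 < u₁) :
    HasDerivAt (fun s : ℝ => v (u₂ / u₁ ^ 2, s / u₁ ^ 3) * u₁ ^ (c / ε))
      ((fderiv ℝ v (u₂ / u₁ ^ 2, u₃ / u₁ ^ 3)) (0, 1 / u₁ ^ 3) * u₁ ^ (c / ε)) u₃ := by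
  have hγ : HasDerivAt (fun s : ℝ => ((u₂ / u₁ ^ 2, s / u₁ ^ 3) : ℝ × ℝ)) ((0, 1 / u₁ ^ 3)) u₃ := by
    have h1 : HasDerivAt (fun s : ℝ => s / u₁ ^ 3) (1 / u₁ ^ 3) u₃ := by
      simpa using (hasDerivAt_id u₃).div_const (u₁ ^ 3)
    exact (hasDerivAt_const u₃ _).prodMk h1
  exact (((hv.differentiable one_ne_zero) _).hasFDerivAt.comp_hasDerivAt u₃ hγ).mul_const _

lemma pde_part (v : ℝ × ℝ → ℝ) (c ε u₁ u₂ u₃ : ℝ) (hε : ε ≠ 0) (h : 0 < u₁) :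
    ε * (u₁ * ((fderiv ℝ v (u₂ / u₁ ^ 2, u₃ / u₁ ^ 3)) (-2 * u₂ / u₁ ^ 3, -3 * u₃ / u₁ ^ 4) * u₁ ^ (c / ε)
          + v (u₂ / u₁ ^ 2, u₃ / u₁ ^ 3) * (c / ε * u₁ ^ (c / ε - 1)))
        + 2 * u₂ * ((fderiv ℝ v (u₂ / u₁ ^ 2, u₃ / u₁ ^ 3)) (1 / u₁ ^ 2, 0) * u₁ ^ (c / ε))
        + 3 * u₃ * ((fderiv ℝ v (u₂ / u₁ ^ 2, u₃ / u₁ ^ 3)) (0, 1 / u₁ ^ 3) * u₁ ^ (c / ε)))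
      = c * (v (u₂ / u₁ ^ 2, u₃ / u₁ ^ 3) * u₁ ^ (c / ε)) := by
  set L := fderiv ℝ v (u₂ / u₁ ^ 2, u₃ / u₁ ^ 3)
  have key : u₁ • ((-2 * u₂ / u₁ ^ 3, -3 * u₃ / u₁ ^ 4) : ℝ × ℝ)
      + (2 * u₂) • ((1 / u₁ ^ 2, 0) : ℝ × ℝ) + (3 * u₃) • ((0, 1 / u₁ ^ 3) : ℝ × ℝ) = 0 := by
    have h0 := h.ne'
    simp only [Prod.smul_mk, Prod.mk_add_mk, smul_eq_mul, Prod.mk_eq_zero]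
    constructor <;> (field_simp; ring)
  have e1 : L (u₁ • ((-2 * u₂ / u₁ ^ 3, -3 * u₃ / u₁ ^ 4) : ℝ × ℝ))
      = u₁ * L (-2 * u₂ / u₁ ^ 3, -3 * u₃ / u₁ ^ 4) := by rw [map_smul, smul_eq_mul]
  have e2 : L ((2 * u₂) • ((1 / u₁ ^ 2, 0) : ℝ × ℝ)) = 2 * u₂ * L (1 / u₁ ^ 2, 0) := by
    rw [map_smul, smul_eq_mul]
  have e3 : L ((3 * u₃) • ((0, 1 / u₁ ^ 3) : ℝ × ℝ)) = 3 * u₃ * L (0, 1 / u₁ ^ 3) := by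
    rw [map_smul, smul_eq_mul]
  have hc0 : u₁ * L (-2 * u₂ / u₁ ^ 3, -3 * u₃ / u₁ ^ 4)
      + 2 * u₂ * L (1 / u₁ ^ 2, 0) + 3 * u₃ * L (0, 1 / u₁ ^ 3) = 0 := by
    rw [← e1, ← e2, ← e3, ← map_add, ← map_add, key, map_zero]
  have hX : u₁ * u₁ ^ (c / ε - 1) = u₁ ^ (c / ε) := by
    rw [mul_comm, ← Real.rpow_add_one h.ne', sub_add_cancel]
  have he : ε * (c / ε) = c := by field_simp
  linear_combination (ε * u₁ ^ (c / ε)) * hc0 + (c * v (u₂ / u₁ ^ 2, u₃ / u₁ ^ 3)) * hX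
    + (u₁ * v (u₂ / u₁ ^ 2, u₃ / u₁ ^ 3) * u₁ ^ (c / ε - 1)) * he

theorem model32_pde_solution (ε : ℝ) (hε : 0 < ε)
    (h1 : 2 - ε ≠ 0) (h2 : 4 - 7 * ε ≠ 0) (h3 : 3 - 4 * ε ≠ 0) (h4 : 3 - 6 * ε ≠ 0)
    (v₁ v₂ : ℝ × ℝ → ℝ) (hv₁ : ContDiff ℝ 1 v₁) (hv₂ : ContDiff ℝ 1 v₂)
    (a₁ a₂ : ℝ → ℝ → ℝ → ℝ)
    (ha₁ : ∀ u₁ u₂ u₃ : ℝ, 0 < u₁ →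
      a₁ u₁ u₂ u₃ = u₁ ^ 2 / (2 - ε) + u₂ ^ 2 * u₃ / (4 - 7 * ε)
        + v₁ (u₂ / u₁ ^ 2, u₃ / u₁ ^ 3) * u₁ ^ (4 / ε))
    (ha₂ : ∀ u₁ u₂ u₃ : ℝ, 0 < u₁ →
      a₂ u₁ u₂ u₃ = 3 * u₁ ^ 4 / (3 - 4 * ε) + u₂ ^ 3 / (3 - 6 * ε)
        + v₂ (u₂ / u₁ ^ 2, u₃ / u₁ ^ 3) * u₁ ^ (3 / ε)) :
    ∀ u₁ u₂ u₃ : ℝ, 0 < u₁ →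
      (ε * (u₁ * deriv (fun s => a₁ s u₂ u₃) u₁
          + 2 * u₂ * deriv (fun s => a₁ u₁ s u₃) u₂
          + 3 * u₃ * deriv (fun s => a₁ u₁ u₂ s) u₃)
        - 4 * a₁ u₁ u₂ u₃ + 2 * u₁ ^ 2 + u₂ ^ 2 * u₃ = 0) ∧
      (ε * (u₁ * deriv (fun s => a₂ s u₂ u₃) u₁
          + 2 * u₂ * deriv (fun s => a₂ u₁ s u₃) u₂
          + 3 * u₃ * deriv (fun s => a₂ u₁ u₂ s) u₃)
        - 3 * a₂ u₁ u₂ u₃ + 3 * u₁ ^ 4 + u₂ ^ 3 = 0) := by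
  intro u₁ u₂ u₃ hu
  have hu' := hu.ne'
  constructor
  · -- first equation
    have hd1 : deriv (fun s => a₁ s u₂ u₃) u₁
        = (↑2 * u₁ ^ 1 / (2 - ε) + 0)
          + ((fderiv ℝ v₁ (u₂ / u₁ ^ 2, u₃ / u₁ ^ 3)) (-2 * u₂ / u₁ ^ 3, -3 * u₃ / u₁ ^ 4) * u₁ ^ (4 / ε)
            + v₁ (u₂ / u₁ ^ 2, u₃ / u₁ ^ 3) * (4 / ε * u₁ ^ (4 / ε - 1))) := by
      have hev : (fun s => a₁ s u₂ u₃) =ᶠ[nhds u₁]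
          (fun s : ℝ => (s ^ 2 / (2 - ε) + u₂ ^ 2 * u₃ / (4 - 7 * ε))
            + v₁ (u₂ / s ^ 2, u₃ / s ^ 3) * s ^ (4 / ε)) := by
        filter_upwards [eventually_gt_nhds hu] with s hs
        rw [ha₁ s u₂ u₃ hs]
      rw [hev.deriv_eq]
      exact ((((hasDerivAt_pow 2 u₁).div_const (2 - ε)).add (hasDerivAt_const u₁ _)).add
        (slot1 v₁ hv₁ 4 ε u₁ u₂ u₃ hu)).deriv
    have hd2 : deriv (fun s => a₁ u₁ s u₃) u₂
        = (0 + ↑2 * u₂ ^ 1 * u₃ / (4 - 7 * ε))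
          + (fderiv ℝ v₁ (u₂ / u₁ ^ 2, u₃ / u₁ ^ 3)) (1 / u₁ ^ 2, 0) * u₁ ^ (4 / ε) := by
      have hfe : (fun s => a₁ u₁ s u₃)
          = (fun s : ℝ => (u₁ ^ 2 / (2 - ε) + s ^ 2 * u₃ / (4 - 7 * ε))
            + v₁ (s / u₁ ^ 2, u₃ / u₁ ^ 3) * u₁ ^ (4 / ε)) := by
        funext s; rw [ha₁ u₁ s u₃ hu]
      rw [hfe]
      exact (((hasDerivAt_const u₂ _).add (((hasDerivAt_pow 2 u₂).mul_const u₃).div_const _)).add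
        (slot2 v₁ hv₁ 4 ε u₁ u₂ u₃ hu)).deriv
    have hd3 : deriv (fun s => a₁ u₁ u₂ s) u₃
        = (0 + u₂ ^ 2 * 1 / (4 - 7 * ε))
          + (fderiv ℝ v₁ (u₂ / u₁ ^ 2, u₃ / u₁ ^ 3)) (0, 1 / u₁ ^ 3) * u₁ ^ (4 / ε) := by
      have hfe : (fun s => a₁ u₁ u₂ s)
          = (fun s : ℝ => (u₁ ^ 2 / (2 - ε) + u₂ ^ 2 * s / (4 - 7 * ε))
            + v₁ (u₂ / u₁ ^ 2, s / u₁ ^ 3) * u₁ ^ (4 / ε)) := by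
        funext s; rw [ha₁ u₁ u₂ s hu]
      rw [hfe]
      exact (((hasDerivAt_const u₃ _).add (((hasDerivAt_id u₃).const_mul (u₂ ^ 2)).div_const _)).add
        (slot3 v₁ hv₁ 4 ε u₁ u₂ u₃ hu)).deriv
    have hpart := pde_part v₁ 4 ε u₁ u₂ u₃ hε.ne' hu
    have hpoly : ε * (u₁ * (2 * u₁ / (2 - ε)) + 2 * u₂ * (2 * u₂ * u₃ / (4 - 7 * ε))
        + 3 * u₃ * (u₂ ^ 2 / (4 - 7 * ε)))
        - 4 * (u₁ ^ 2 / (2 - ε) + u₂ ^ 2 * u₃ / (4 - 7 * ε)) + 2 * u₁ ^ 2 + u₂ ^ 2 * u₃ = 0 := by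
      have h2' : 4 - ε * 7 ≠ 0 := by rwa [mul_comm] at h2
      field_simp
      ring
    rw [hd1, hd2, hd3, ha₁ u₁ u₂ u₃ hu]
    -- cast cleanup not needed
    linear_combination hpart + hpoly
  · -- second equation
    have hd1 : deriv (fun s => a₂ s u₂ u₃) u₁
        = (3 * (↑4 * u₁ ^ 3) / (3 - 4 * ε) + 0)
          + ((fderiv ℝ v₂ (u₂ / u₁ ^ 2, u₃ / u₁ ^ 3)) (-2 * u₂ / u₁ ^ 3, -3 * u₃ / u₁ ^ 4) * u₁ ^ (3 / ε)
            + v₂ (u₂ / u₁ ^ 2, u₃ / u₁ ^ 3) * (3 / ε * u₁ ^ (3 / ε - 1))) := by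
      have hev : (fun s => a₂ s u₂ u₃) =ᶠ[nhds u₁]
          (fun s : ℝ => (3 * s ^ 4 / (3 - 4 * ε) + u₂ ^ 3 / (3 - 6 * ε))
            + v₂ (u₂ / s ^ 2, u₃ / s ^ 3) * s ^ (3 / ε)) := by
        filter_upwards [eventually_gt_nhds hu] with s hs
        rw [ha₂ s u₂ u₃ hs]
      rw [hev.deriv_eq]
      exact (((((hasDerivAt_pow 4 u₁).const_mul 3).div_const (3 - 4 * ε)).add
        (hasDerivAt_const u₁ _)).add (slot1 v₂ hv₂ 3 ε u₁ u₂ u₃ hu)).deriv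
    have hd2 : deriv (fun s => a₂ u₁ s u₃) u₂
        = (0 + ↑3 * u₂ ^ 2 / (3 - 6 * ε))
          + (fderiv ℝ v₂ (u₂ / u₁ ^ 2, u₃ / u₁ ^ 3)) (1 / u₁ ^ 2, 0) * u₁ ^ (3 / ε) := by
      have hfe : (fun s => a₂ u₁ s u₃)
          = (fun s : ℝ => (3 * u₁ ^ 4 / (3 - 4 * ε) + s ^ 3 / (3 - 6 * ε))
            + v₂ (s / u₁ ^ 2, u₃ / u₁ ^ 3) * u₁ ^ (3 / ε)) := by
        funext s; rw [ha₂ u₁ s u₃ hu]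
      rw [hfe]
      exact (((hasDerivAt_const u₂ _).add ((hasDerivAt_pow 3 u₂).div_const _)).add
        (slot2 v₂ hv₂ 3 ε u₁ u₂ u₃ hu)).deriv
    have hd3 : deriv (fun s => a₂ u₁ u₂ s) u₃
        = (0 + 0)
          + (fderiv ℝ v₂ (u₂ / u₁ ^ 2, u₃ / u₁ ^ 3)) (0, 1 / u₁ ^ 3) * u₁ ^ (3 / ε) := by
      have hfe : (fun s => a₂ u₁ u₂ s)
          = (fun s : ℝ => (3 * u₁ ^ 4 / (3 - 4 * ε) + u₂ ^ 3 / (3 - 6 * ε))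
            + v₂ (u₂ / u₁ ^ 2, s / u₁ ^ 3) * u₁ ^ (3 / ε)) := by
        funext s; rw [ha₂ u₁ u₂ s hu]
      rw [hfe]
      exact (((hasDerivAt_const u₃ _).add (hasDerivAt_const u₃ _)).add
        (slot3 v₂ hv₂ 3 ε u₁ u₂ u₃ hu)).deriv
    have hpart := pde_part v₂ 3 ε u₁ u₂ u₃ hε.ne' hu
    have hpoly : ε * (u₁ * (3 * (4 * u₁ ^ 3) / (3 - 4 * ε)) + 2 * u₂ * (3 * u₂ ^ 2 / (3 - 6 * ε))
        + 3 * u₃ * 0)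
        - 3 * (3 * u₁ ^ 4 / (3 - 4 * ε) + u₂ ^ 3 / (3 - 6 * ε)) + 3 * u₁ ^ 4 + u₂ ^ 3 = 0 := by
      have h3' : 3 - ε * 4 ≠ 0 := by rwa [mul_comm] at h3
      have h4' : 3 - ε * 6 ≠ 0 := by rwa [mul_comm] at h4
      field_simp
      ring
    rw [hd1, hd2, hd3, ha₂ u₁ u₂ u₃ hu]
    -- cast cleanup not needed
    linear_combination hpart + hpoly
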